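/- Let X : Ω → ℝⁿ be a zero-mean random vector that is sub-Gaussian with matrix variance proxy Σ ≻ 0. Then for every m > 0, E[ exp( ‖X‖²_{Σ⁻¹} / (2 + 2m) ) ] ≤ ((1 + m)/m)^{n/2}, where ‖x‖²_{Σ⁻¹} := xᵀΣ⁻¹x. -/

import Mathlib

open MeasureTheory Matrix

noncomputable section

/-- A random vector `X` with mean `μ` is sub-Gaussian with matrix variance proxy `S`
(`X ~ SG(μ, S)`): its moment generating function exists and
`E[exp(λᵀ(X − μ))] ≤ exp(λᵀ S λ / 2)` for all `λ ∈ ℝⁿ`. -/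
def IsSubGaussianMat {Ω : Type*} [MeasurableSpace Ω] {n : ℕ} (P : Measure Ω)
    (X : Ω → Fin n → ℝ) (μ : Fin n → ℝ) (S : Matrix (Fin n) (Fin n) ℝ) : Prop :=
  ∀ l : Fin n → ℝ,
    Integrable (fun ω => Real.exp (l ⬝ᵥ (X ω - μ))) P ∧
    ∫ ω, Real.exp (l ⬝ᵥ (X ω - μ)) ∂P ≤ Real.exp ((l ⬝ᵥ (S *ᵥ l)) / 2)

open Real

open scoped MatrixOrder

noncomputable abbrev Matrix.PosSemidef.sqrt {n : ℕ} {A : Matrix (Fin n) (Fin n) ℝ}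
    (_hA : A.PosSemidef) : Matrix (Fin n) (Fin n) ℝ :=
  CFC.sqrt A

lemma gauss_lin_key {b : ℝ} (hb : 0 < b) (y t : ℝ) :
    t * y - b * t ^ 2 / 2 = y ^ 2 / (2 * b) + (-(b / 2) * (t - y / b) ^ 2) := by
  field_simp
  ring

lemma gauss_lin_integrable {b : ℝ} (hb : 0 < b) (y : ℝ) :
    Integrable (fun t : ℝ => Real.exp (t * y - b * t ^ 2 / 2)) := by
  simp_rw [gauss_lin_key hb, Real.exp_add]
  exact ((integrable_exp_neg_mul_sq (by linarith : (0:ℝ) < b/2)).comp_sub_right (y/b)).const_mul _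

lemma gauss_lin_integral {b : ℝ} (hb : 0 < b) (y : ℝ) :
    ∫ t : ℝ, Real.exp (t * y - b * t ^ 2 / 2)
      = Real.sqrt (2 * π / b) * Real.exp (y ^ 2 / (2 * b)) := by
  simp_rw [gauss_lin_key hb, Real.exp_add, integral_const_mul]
  rw [integral_sub_right_eq_self (fun t => Real.exp (-(b/2) * t ^ 2)) (y/b), integral_gaussian]
  rw [mul_comm]
  congr 1
  rw [div_div_eq_mul_div, mul_comm]

lemma gaussn_split {n : ℕ} (b : ℝ) (y l : Fin n → ℝ) :
    Real.exp (l ⬝ᵥ y - b * (l ⬝ᵥ l) / 2)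
      = ∏ i, Real.exp (l i * y i - b * (l i) ^ 2 / 2) := by
  rw [← Real.exp_sum]
  congr 1
  simp only [dotProduct, Finset.mul_sum, ← Finset.sum_div, ← Finset.sum_sub_distrib]
  rw [Finset.sum_div, ← Finset.sum_sub_distrib]
  exact Finset.sum_congr rfl fun i _ => by ring

lemma gaussn_integrable {n : ℕ} {b : ℝ} (hb : 0 < b) (y : Fin n → ℝ) :
    Integrable (fun l : Fin n → ℝ => Real.exp (l ⬝ᵥ y - b * (l ⬝ᵥ l) / 2)) := by
  simp_rw [gaussn_split]
  exact Integrable.fintype_prod (f := fun i t => Real.exp (t * y i - b * t ^ 2 / 2))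
    (fun i => gauss_lin_integrable hb (y i))

lemma gaussn_integral {n : ℕ} {b : ℝ} (hb : 0 < b) (y : Fin n → ℝ) :
    ∫ l : Fin n → ℝ, Real.exp (l ⬝ᵥ y - b * (l ⬝ᵥ l) / 2)
      = Real.sqrt (2 * π / b) ^ n * Real.exp ((y ⬝ᵥ y) / (2 * b)) := by
  simp_rw [gaussn_split]
  rw [integral_fintype_prod_volume_eq_prod (ι := Fin n) (f := fun i t => Real.exp (t * y i - b * t ^ 2 / 2))]
  simp_rw [gauss_lin_integral hb]
  rw [Finset.prod_mul_distrib, Finset.prod_const, ← Real.exp_sum]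
  simp only [Finset.card_univ, Fintype.card_fin, dotProduct, ← Finset.sum_div]
  congr 2
  simp_rw [sq]

section MatrixAlg
variable {n : ℕ} {Sig : Matrix (Fin n) (Fin n) ℝ} (hSig : Sig.PosDef)

lemma sqrtInv_transpose : (hSig.inv.posSemidef.sqrt)ᵀ = hSig.inv.posSemidef.sqrt := by
  rw [← conjTranspose_eq_transpose_of_trivial]
  exact (CFC.sqrt_nonneg Sig⁻¹).posSemidef.1

lemma sqrtInv_mul_self : hSig.inv.posSemidef.sqrt * hSig.inv.posSemidef.sqrt = Sig⁻¹ :=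
  CFC.sqrt_mul_sqrt_self Sig⁻¹ hSig.inv.posSemidef.nonneg

lemma sqrtInv_conj : hSig.inv.posSemidef.sqrt * Sig * hSig.inv.posSemidef.sqrt = 1 := by
  have h1 : hSig.inv.posSemidef.sqrt * (hSig.inv.posSemidef.sqrt * Sig) = 1 := by
    rw [← mul_assoc, sqrtInv_mul_self hSig,
      Matrix.nonsing_inv_mul Sig (isUnit_iff_ne_zero.2 hSig.det_pos.ne')]
  exact mul_eq_one_comm.mp h1

lemma quad_eq (x : Fin n → ℝ) :
    x ⬝ᵥ (Sig⁻¹ *ᵥ x)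
      = (hSig.inv.posSemidef.sqrt *ᵥ x) ⬝ᵥ (hSig.inv.posSemidef.sqrt *ᵥ x) := by
  rw [eq_comm, dotProduct_mulVec, ← Matrix.mulVec_transpose, sqrtInv_transpose hSig,
    mulVec_mulVec, sqrtInv_mul_self hSig, dotProduct_comm]

lemma dot_swap (l x : Fin n → ℝ) :
    l ⬝ᵥ (hSig.inv.posSemidef.sqrt *ᵥ x) = (hSig.inv.posSemidef.sqrt *ᵥ l) ⬝ᵥ x := by
  rw [dotProduct_mulVec, ← Matrix.mulVec_transpose, sqrtInv_transpose hSig]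

lemma quad_one (l : Fin n → ℝ) :
    (hSig.inv.posSemidef.sqrt *ᵥ l) ⬝ᵥ (Sig *ᵥ (hSig.inv.posSemidef.sqrt *ᵥ l)) = l ⬝ᵥ l := by
  have hS : Sigᵀ = Sig := by
    rw [← conjTranspose_eq_transpose_of_trivial]; exact hSig.1.eq
  rw [mulVec_mulVec, dotProduct_mulVec, ← Matrix.mulVec_transpose, Matrix.transpose_mul,
    sqrtInv_transpose hSig, hS, mulVec_mulVec, sqrtInv_conj hSig, Matrix.one_mulVec]

end MatrixAlg

theorem subGaussian_exp_mahalanobis_bound_aux {Ω : Type*} [MeasurableSpace Ω] {n : ℕ}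
    (P : Measure Ω) [IsProbabilityMeasure P]
    (X : Ω → Fin n → ℝ) (hX : Measurable X)
    (Sig : Matrix (Fin n) (Fin n) ℝ) (hSig : Sig.PosDef)
    (hsg : ∀ l : Fin n → ℝ,
      Integrable (fun ω => Real.exp (l ⬝ᵥ (X ω - 0))) P ∧
      ∫ ω, Real.exp (l ⬝ᵥ (X ω - 0)) ∂P ≤ Real.exp ((l ⬝ᵥ (Sig *ᵥ l)) / 2))
    (m : ℝ) (hm : 0 < m) :
    ∫⁻ ω, ENNReal.ofReal (Real.exp ((X ω ⬝ᵥ (Sig⁻¹ *ᵥ X ω)) / (2 + 2 * m))) ∂P ≤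
      ENNReal.ofReal (((1 + m) / m) ^ ((n : ℝ) / 2)) := by
  simp only [sub_zero] at hsg
  set a : ℝ := 1 + m with ha_def
  have ha : 0 < a := by simp only [ha_def]; linarith
  set B := hSig.inv.posSemidef.sqrt with hB_def
  set Y : Ω → Fin n → ℝ := fun ω => B *ᵥ X ω with hY_def
  have hYm : Measurable Y := by
    rw [measurable_pi_iff]
    intro i
    simp only [hY_def, mulVec, dotProduct]
    exact Finset.measurable_sum _ fun j _ =>
      (measurable_const.mul ((measurable_pi_apply j).comp hX))
  set c : ℝ := Real.sqrt (2 * π / a) ^ n with hc_def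
  have hc : 0 < c := pow_pos (Real.sqrt_pos.2 (by positivity)) n
  -- measurability for Tonelli
  have hmeas : AEMeasurable
      (fun p : Ω × (Fin n → ℝ) =>
        ENNReal.ofReal (Real.exp (p.2 ⬝ᵥ Y p.1 - a * (p.2 ⬝ᵥ p.2) / 2)))
      (P.prod volume) := by
    have h1 : Measurable fun p : Ω × (Fin n → ℝ) =>
        p.2 ⬝ᵥ Y p.1 - a * (p.2 ⬝ᵥ p.2) / 2 := by
      apply Measurable.sub
      · simp only [dotProduct]
        exact Finset.measurable_sum _ fun j _ =>
          ((measurable_pi_apply j).comp measurable_snd).mul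
            ((measurable_pi_apply j).comp (hYm.comp measurable_fst))
      · apply Measurable.div_const
        apply Measurable.const_mul
        simp only [dotProduct]
        exact Finset.measurable_sum _ fun j _ =>
          ((measurable_pi_apply j).comp measurable_snd).mul
            ((measurable_pi_apply j).comp measurable_snd)
    exact (ENNReal.measurable_ofReal.comp (Real.measurable_exp.comp h1)).aemeasurable
  calc
    ∫⁻ ω, ENNReal.ofReal (Real.exp ((X ω ⬝ᵥ (Sig⁻¹ *ᵥ X ω)) / (2 + 2 * m))) ∂P
      = ∫⁻ ω, ENNReal.ofReal c⁻¹
          * ∫⁻ l, ENNReal.ofReal (Real.exp (l ⬝ᵥ Y ω - a * (l ⬝ᵥ l) / 2)) ∂volume ∂P := by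
        refine lintegral_congr fun ω => ?_
        have h2 : (X ω ⬝ᵥ (Sig⁻¹ *ᵥ X ω)) / (2 + 2 * m) = (Y ω ⬝ᵥ Y ω) / (2 * a) := by
          rw [quad_eq hSig]
          congr 1
          simp only [ha_def]; ring
        have h3 : Real.exp ((Y ω ⬝ᵥ Y ω) / (2 * a))
            = c⁻¹ * ∫ l : Fin n → ℝ, Real.exp (l ⬝ᵥ Y ω - a * (l ⬝ᵥ l) / 2) := by
          rw [gaussn_integral ha (Y ω), ← hc_def, ← mul_assoc, inv_mul_cancel₀ hc.ne', one_mul]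
        rw [h2, h3, ENNReal.ofReal_mul (by positivity),
          ofReal_integral_eq_lintegral_ofReal (gaussn_integrable ha (Y ω))
            (ae_of_all _ fun l => (Real.exp_pos _).le)]
    _ = ENNReal.ofReal c⁻¹
          * ∫⁻ l : Fin n → ℝ, ∫⁻ ω, ENNReal.ofReal (Real.exp (l ⬝ᵥ Y ω - a * (l ⬝ᵥ l) / 2)) ∂P ∂volume := by
        rw [lintegral_const_mul' _ _ ENNReal.ofReal_ne_top, lintegral_lintegral_swap hmeas]
    _ ≤ ENNReal.ofReal c⁻¹
          * ∫⁻ l : Fin n → ℝ, ENNReal.ofReal (Real.exp (l ⬝ᵥ (0 : Fin n → ℝ) - m * (l ⬝ᵥ l) / 2)) ∂volume := by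
        refine mul_le_mul_right (lintegral_mono fun l => ?_) _
        have h4 : ∀ ω, l ⬝ᵥ Y ω - a * (l ⬝ᵥ l) / 2
            = (B *ᵥ l) ⬝ᵥ X ω + (- (a * (l ⬝ᵥ l) / 2)) := by
          intro ω
          rw [hY_def, dot_swap hSig]
          ring
        simp_rw [h4, Real.exp_add, ENNReal.ofReal_mul (Real.exp_pos _).le]
        rw [lintegral_mul_const' _ _ ENNReal.ofReal_ne_top]
        have h5 : ∫⁻ ω, ENNReal.ofReal (Real.exp ((B *ᵥ l) ⬝ᵥ X ω)) ∂P
            ≤ ENNReal.ofReal (Real.exp ((l ⬝ᵥ l) / 2)) := by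
          rw [← ofReal_integral_eq_lintegral_ofReal (hsg (B *ᵥ l)).1
            (ae_of_all _ fun ω => (Real.exp_pos _).le)]
          refine ENNReal.ofReal_le_ofReal ?_
          refine le_trans (hsg (B *ᵥ l)).2 ?_
          rw [quad_one hSig]
        refine le_trans (mul_le_mul_left h5 _) ?_
        rw [← ENNReal.ofReal_mul (Real.exp_pos _).le, ← Real.exp_add]
        refine ENNReal.ofReal_le_ofReal (Real.exp_le_exp.2 (le_of_eq ?_))
        simp only [dotProduct_zero, ha_def]
        ring
    _ = ENNReal.ofReal c⁻¹ * ENNReal.ofReal (Real.sqrt (2 * π / m) ^ n) := by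
        rw [← ofReal_integral_eq_lintegral_ofReal (gaussn_integrable hm 0)
          (ae_of_all _ fun l => (Real.exp_pos _).le), gaussn_integral hm 0]
        simp
    _ = ENNReal.ofReal (((1 + m) / m) ^ ((n : ℝ) / 2)) := by
        rw [← ENNReal.ofReal_mul (by positivity)]
        congr 1
        rw [hc_def, ← inv_pow, ← mul_pow, ← Real.sqrt_inv, ← Real.sqrt_mul (by positivity)]
        have h6 : (2 * π / a)⁻¹ * (2 * π / m) = a / m := by
          field_simp
        rw [h6, Real.sqrt_eq_rpow, ← Real.rpow_natCast ((a / m) ^ ((1:ℝ)/2)) n,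
          ← Real.rpow_mul (by positivity), ha_def]
        congr 1
        ring

/-- if `X` is zero-mean sub-Gaussian with matrix variance proxy `Σ ≻ 0`, then
for every `m > 0`, `E[exp(‖X‖²_{Σ⁻¹} / (2 + 2m))] ≤ ((1 + m)/m)^{n/2}`. -/
theorem subGaussian_exp_mahalanobis_bound {Ω : Type*} [MeasurableSpace Ω] {n : ℕ}
    (P : Measure Ω) [IsProbabilityMeasure P]
    (X : Ω → Fin n → ℝ) (hX : Measurable X)
    (Sig : Matrix (Fin n) (Fin n) ℝ) (hSig : Sig.PosDef)
    (hsg : IsSubGaussianMat P X 0 Sig)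
    (m : ℝ) (hm : 0 < m) :
    ∫⁻ ω, ENNReal.ofReal (Real.exp ((X ω ⬝ᵥ (Sig⁻¹ *ᵥ X ω)) / (2 + 2 * m))) ∂P ≤
      ENNReal.ofReal (((1 + m) / m) ^ ((n : ℝ) / 2)) := by
  exact subGaussian_exp_mahalanobis_bound_aux P X hX Sig hSig hsg m hm
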